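/- Let A be a codeterministic and complete VRA all of whose component automata are complete DFAs, and let B be the VRA obtained from A by replacing the starting automaton A^S with the DFA B^S accepting the complement of L_reg(A^S) over Σ_int ∪ Σ_proc (i.e., swapping final and non-final states). Then L(B) = WM(Σ̂) ∖ L(A). -/
import Mathlib


/-- A symbol of a pushdown alphabet: internal, call, or return. -/
inductive VSym (I C R : Type) : Type
  | int  : I → VSym I C R
  | call : C → VSym I C R
  | ret  : R → VSym I C R

/-- The set of well-matched words over a pushdown alphabet. -/
inductive WellMatched {I C R : Type} : List (VSym I C R) → Prop
  | internal (u : List I) : WellMatched (u.map VSym.int)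
  | bracket {w : List (VSym I C R)} (c : C) (r : R) :
      WellMatched w → WellMatched (VSym.call c :: w ++ [VSym.ret r])
  | concat {w₁ w₂ : List (VSym I C R)} :
      WellMatched w₁ → WellMatched w₂ → WellMatched (w₁ ++ w₂)

def VSym.isCall {I C R : Type} : VSym I C R → Bool
  | .call _ => true
  | _ => false

def VSym.isRet {I C R : Type} : VSym I C R → Bool
  | .ret _ => true
  | _ => false

/-- The depth of a word: the maximal excess of call symbols over return symbols
in any prefix (the deepest level of unmatched calls at any point). -/
def VSym.depth {I C R : Type} (w : List (VSym I C R)) : ℕ :=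
  (w.inits.map fun p => p.countP VSym.isCall - p.countP VSym.isRet).foldr max 0

/-- A visibly recursive automaton: a family of finite automata over the internal
and procedural symbols, identified by the component map `comp` (`none` denotes the
starting automaton `A^S`, `some J` the component automaton `A^J`), together with a
linking function `link` assigning to each procedural symbol a call/return pair.
Transitions of each component automaton stay within that component. -/
structure VRA (I C R P Q : Type) where
  /-- the linking function `f : Σ_proc → Σ_call × Σ_ret` -/
  link : P → C × R
  /-- the component automaton each state belongs to (`none` = starting automaton) -/
  comp : Q → Option P
  init : Q → Prop
  final : Q → Prop
  intTrans : Q → I → Q → Prop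
  procTrans : Q → P → Q → Prop
  intTrans_comp : ∀ ⦃q a p⦄, intTrans q a p → comp p = comp q
  procTrans_comp : ∀ ⦃q J p⦄, procTrans q J p → comp p = comp q

namespace VRA

variable {I C R P Q : Type}

/-- One step of a recursive run, on configurations (state, stack of states). -/
inductive Step (A : VRA I C R P Q) : Q × List Q → VSym I C R → Q × List Q → Prop
  | int {q q' : Q} {σ : List Q} {a : I} :
      A.intTrans q a q' → Step A (q, σ) (VSym.int a) (q', σ)
  | call {q q' p : Q} {σ : List Q} {J : P} {c : C} :
      A.procTrans q J p → (A.link J).1 = c → A.comp q' = some J → A.init q' →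
      Step A (q, σ) (VSym.call c) (q', p :: σ)
  | ret {q p : Q} {σ : List Q} {J : P} {r : R} :
      A.comp q = some J → A.final q → (A.link J).2 = r →
      Step A (q, p :: σ) (VSym.ret r) (p, σ)

/-- Recursive runs of a VRA. -/
inductive Run (A : VRA I C R P Q) : Q × List Q → List (VSym I C R) → Q × List Q → Prop
  | nil (cfg : Q × List Q) : Run A cfg [] cfg
  | cons {cfg₁ cfg₂ cfg₃ : Q × List Q} {a : VSym I C R} {w : List (VSym I C R)} :
      Step A cfg₁ a cfg₂ → Run A cfg₂ w cfg₃ → Run A cfg₁ (a :: w) cfg₃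

/-- The recursive language of the component automaton `A^J` (`J = none` is the
starting automaton): words with a recursive run from an initial state of the
component with empty stack to a final state of the component with empty stack. -/
def RecLang (A : VRA I C R P Q) (J : Option P) : Set (List (VSym I C R)) :=
  {w | ∃ qi qf, A.comp qi = J ∧ A.init qi ∧ A.comp qf = J ∧ A.final qf ∧
    Run A (qi, []) w (qf, [])}

/-- The language of a VRA: the recursive language of its starting automaton. -/
def Lang (A : VRA I C R P Q) : Set (List (VSym I C R)) := A.RecLang none

/-- Regular runs: runs of the component automata viewed as ordinary finite
automata over the alphabet `Σ_int ∪ Σ_proc`. -/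
inductive RegRun (A : VRA I C R P Q) : Q → List (I ⊕ P) → Q → Prop
  | nil (q : Q) : RegRun A q [] q
  | int {q q' p : Q} {a : I} {w : List (I ⊕ P)} :
      A.intTrans q a q' → RegRun A q' w p → RegRun A q (Sum.inl a :: w) p
  | proc {q q' p : Q} {J : P} {w : List (I ⊕ P)} :
      A.procTrans q J q' → RegRun A q' w p → RegRun A q (Sum.inr J :: w) p

/-- The regular language of the component automaton `A^J`, over `Σ_int ∪ Σ_proc`. -/
def RegLang (A : VRA I C R P Q) (J : Option P) : Set (List (I ⊕ P)) :=
  {w | ∃ qi qf, A.comp qi = J ∧ A.init qi ∧ A.comp qf = J ∧ A.final qf ∧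
    RegRun A qi w qf}

/-- A VRA is codeterministic if component automata linked to the same call/return
pair have pairwise disjoint recursive languages. -/
def Codeterministic (A : VRA I C R P Q) : Prop :=
  ∀ J J' : P, J ≠ J' → A.link J = A.link J' →
    A.RecLang (some J) ∩ A.RecLang (some J') = ∅

/-- A VRA is complete if every state has an outgoing transition on every symbol of
`Σ_int ∪ Σ_proc`, and for every call/return pair the recursive languages of the
linked component automata cover all well-matched words. -/
def Complete (A : VRA I C R P Q) : Prop :=
  (∀ (q : Q) (a : I), ∃ p, A.intTrans q a p) ∧
  (∀ (q : Q) (J : P), ∃ p, A.procTrans q J p) ∧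
  (∀ (c : C) (r : R),
    (⋃ J ∈ {J : P | A.link J = (c, r)}, A.RecLang (some J)) = {w | WellMatched w})

/-- A VRA is deterministic if every component automaton (including the starting
one) has a unique initial state and deterministic transitions, and procedural
transitions from a common state on procedural symbols with the same call symbol
agree on the procedural symbol. -/
def Deterministic (A : VRA I C R P Q) : Prop :=
  (∀ J : Option P, ∃! q, A.comp q = J ∧ A.init q) ∧
  (∀ q a p p', A.intTrans q a p → A.intTrans q a p' → p = p') ∧
  (∀ q J p p', A.procTrans q J p → A.procTrans q J p' → p = p') ∧
  (∀ q J J' p p', A.procTrans q J p → A.procTrans q J' p' →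
    (A.link J).1 = (A.link J').1 → J = J')

/-- All component automata of the VRA are complete DFAs: a unique initial state in
each component and exactly one outgoing transition per state and symbol. -/
def AllCompleteDFA (A : VRA I C R P Q) : Prop :=
  (∀ J : Option P, ∃! q, A.comp q = J ∧ A.init q) ∧
  (∀ (q : Q) (a : I), ∃! p, A.intTrans q a p) ∧
  (∀ (q : Q) (J : P), ∃! p, A.procTrans q J p)

/-- The size of a VRA: number of states plus number of transitions. -/
noncomputable def size (A : VRA I C R P Q) : ℕ :=
  Nat.card Q + Nat.card {t : Q × I × Q // A.intTrans t.1 t.2.1 t.2.2}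
    + Nat.card {t : Q × P × Q // A.procTrans t.1 t.2.1 t.2.2}

/-! ### Auxiliary lemmas -/

lemma Run.append' {A : VRA I C R P Q} {cfg₁ cfg₂ cfg₃ : Q × List Q}
    {w₁ w₂ : List (VSym I C R)}
    (h₁ : A.Run cfg₁ w₁ cfg₂) (h₂ : A.Run cfg₂ w₂ cfg₃) : A.Run cfg₁ (w₁ ++ w₂) cfg₃ := by
  induction h₁ with
  | nil => exact h₂
  | cons s _ ih => exact .cons s (ih h₂)

lemma Run.lift' {A : VRA I C R P Q} {cfg cfg' : Q × List Q} {w : List (VSym I C R)}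
    (τ : List Q) (h : A.Run cfg w cfg') :
    A.Run (cfg.1, cfg.2 ++ τ) w (cfg'.1, cfg'.2 ++ τ) := by
  induction h with
  | nil => exact .nil _
  | @cons cfg₁ cfg₂ cfg₃ a w s _ ih =>
    refine .cons ?_ ih
    cases s with
    | int h => exact .int h
    | call h h1 h2 h3 => exact .call h h1 h2 h3
    | ret h1 h2 h3 => exact .ret h1 h2 h3

lemma stack_len {A : VRA I C R P Q} {w : List (VSym I C R)} {cfg cfg' : Q × List Q}
    (h : A.Run cfg w cfg') :
    cfg'.2.length + w.countP VSym.isRet = cfg.2.length + w.countP VSym.isCall := by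
  induction h with
  | nil => rfl
  | cons s _ ih =>
    rw [List.countP_cons, List.countP_cons]
    cases s with
    | int h => simp [VSym.isCall, VSym.isRet] at ih ⊢; omega
    | call h h1 h2 h3 => simp [VSym.isCall, VSym.isRet] at ih ⊢; omega
    | ret h1 h2 h3 => simp [VSym.isCall, VSym.isRet] at ih ⊢; omega

lemma prefix_bal {A : VRA I C R P Q} {w : List (VSym I C R)} {cfg cfg' : Q × List Q}
    (h : A.Run cfg w cfg') :
    ∀ pre, pre <+: w → pre.countP VSym.isRet ≤ cfg.2.length + pre.countP VSym.isCall := by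
  induction h with
  | nil =>
    intro pre hp
    rw [List.prefix_nil] at hp
    subst hp; simp
  | cons s _ ih =>
    intro pre hp
    cases pre with
    | nil => simp
    | cons b pre' =>
      rcases List.cons_prefix_cons.mp hp with ⟨rfl, hp'⟩
      have := ih pre' hp'
      cases s <;> simp [List.countP_cons, VSym.isCall, VSym.isRet] at * <;> omega

/-- The "pop" decomposition lemma. -/
lemma pop {A : VRA I C R P Q} :
    ∀ (n : ℕ) (w : List (VSym I C R)), w.length ≤ n →
    ∀ (q p : Q) (σ : List Q) (q' : Q), A.Run (q, p :: σ) w (q', []) →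
    ∃ w₁ r w₂ qm J, w = w₁ ++ VSym.ret r :: w₂ ∧ A.Run (q, ([] : List Q)) w₁ (qm, []) ∧
      A.comp qm = some J ∧ A.final qm ∧ (A.link J).2 = r ∧ A.Run (p, σ) w₂ (q', []) := by
  intro n
  induction n with
  | zero =>
    intro w hw q p σ q' h
    rw [Nat.le_zero, List.length_eq_zero_iff] at hw
    subst hw
    cases h
  | succ n ih =>
    intro w hw q p σ q' h
    cases h with
    | @cons _ cfg₂ _ a w' s hrest =>
      cases s with
      | @int _ q₁ _ a ht =>
        obtain ⟨w₁, r, w₂, qm, J, rfl, hr1, h1, h2, h3, hr2⟩ :=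
          ih w' (by simp at hw; omega) q₁ p σ q' hrest
        exact ⟨VSym.int a :: w₁, r, w₂, qm, J, rfl, .cons (.int ht) hr1, h1, h2, h3, hr2⟩
      | @call _ q₁ p₁ _ J₀ c hpr hc hcm hin =>
        obtain ⟨u₁, r₁, u₂, m₁, J₁, rfl, hru, hm1, hm2, hm3, hru2⟩ :=
          ih w' (by simp at hw; omega) q₁ p₁ (p :: σ) q' hrest
        have hlen : u₂.length ≤ n := by
          have := hw; simp at this; omega
        obtain ⟨v₁, r, v₂, qm, J, rfl, hrv, hq1, hq2, hq3, hrv2⟩ :=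
          ih u₂ hlen p₁ p σ q' hru2
        refine ⟨VSym.call c :: u₁ ++ VSym.ret r₁ :: v₁, r, v₂, qm, J, by simp, ?_, hq1, hq2,
          hq3, hrv2⟩
        have step1 : A.Step (q, ([] : List Q)) (VSym.call c) (q₁, [p₁]) :=
          .call hpr hc hcm hin
        have run2 : A.Run (q₁, [p₁]) u₁ (m₁, [p₁]) := by
          simpa using Run.lift' [p₁] hru
        have step3 : A.Step (m₁, [p₁]) (VSym.ret r₁) (p₁, []) := .ret hm1 hm2 hm3
        have : A.Run (q, ([] : List Q)) (VSym.call c :: (u₁ ++ VSym.ret r₁ :: v₁)) (qm, []) :=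
          .cons step1 (Run.append' run2 (.cons step3 hrv))
        simpa using this
      | @ret _ _ _ J r hcm hfin hr =>
        exact ⟨[], r, w', q, J, rfl, .nil _, hcm, hfin, hr, hrest⟩

lemma pop' {A : VRA I C R P Q} {w : List (VSym I C R)} {q p : Q} {σ : List Q} {q' : Q}
    (h : A.Run (q, p :: σ) w (q', [])) :
    ∃ w₁ r w₂ qm J, w = w₁ ++ VSym.ret r :: w₂ ∧ A.Run (q, ([] : List Q)) w₁ (qm, []) ∧
      A.comp qm = some J ∧ A.final qm ∧ (A.link J).2 = r ∧ A.Run (p, σ) w₂ (q', []) :=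
  pop w.length w le_rfl q p σ q' h

lemma comp_pres {A : VRA I C R P Q} :
    ∀ (n : ℕ) (w : List (VSym I C R)), w.length ≤ n →
    ∀ q q' : Q, A.Run (q, ([] : List Q)) w (q', []) → A.comp q' = A.comp q := by
  intro n
  induction n with
  | zero =>
    intro w hw q q' h
    rw [Nat.le_zero, List.length_eq_zero_iff] at hw
    subst hw
    cases h
    rfl
  | succ n ih =>
    intro w hw q q' h
    cases h with
    | nil => rfl
    | @cons _ cfg₂ _ a w' s hrest =>
      cases s with
      | @int _ q₁ _ a ht =>
        have := ih w' (by simp at hw; omega) q₁ q' hrest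
        rw [this, A.intTrans_comp ht]
      | @call _ q₁ p₁ _ J₀ c hpr hc hcm hin =>
        obtain ⟨u₁, r₁, u₂, m₁, J₁, rfl, hru, hm1, hm2, hm3, hru2⟩ := pop' hrest
        have hlen : u₂.length ≤ n := by
          have := hw; simp at this; omega
        have := ih u₂ hlen p₁ q' hru2
        rw [this, A.procTrans_comp hpr]

lemma run_wm {A : VRA I C R P Q} :
    ∀ (n : ℕ) (w : List (VSym I C R)), w.length ≤ n →
    ∀ q q' : Q, A.Run (q, ([] : List Q)) w (q', []) → WellMatched w := by
  intro n
  induction n with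
  | zero =>
    intro w hw q q' h
    rw [Nat.le_zero, List.length_eq_zero_iff] at hw
    subst hw
    simpa using WellMatched.internal (C := C) (R := R) ([] : List I)
  | succ n ih =>
    intro w hw q q' h
    cases h with
    | nil => simpa using WellMatched.internal (C := C) (R := R) ([] : List I)
    | @cons _ cfg₂ _ a w' s hrest =>
      cases s with
      | @int _ q₁ _ a ht =>
        have h1 := ih w' (by simp at hw; omega) q₁ q' hrest
        have h2 : WellMatched (List.map (VSym.int (C := C) (R := R)) [a] ++ w') :=
          WellMatched.concat (WellMatched.internal [a]) h1
        simpa using h2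
      | @call _ q₁ p₁ _ J₀ c hpr hc hcm hin =>
        obtain ⟨u₁, r₁, u₂, m₁, J₁, rfl, hru, hm1, hm2, hm3, hru2⟩ := pop' hrest
        have hw' : u₁.length + u₂.length + 1 ≤ n := by simp at hw; omega
        have wm1 : WellMatched u₁ := ih u₁ (by omega) q₁ m₁ hru
        have wm2 : WellMatched u₂ := ih u₂ (by omega) p₁ q' hru2
        have := WellMatched.concat (WellMatched.bracket c r₁ wm1) wm2
        simpa using this

lemma total {A : VRA I C R P Q} (hcomp : A.Complete) (hdfa : A.AllCompleteDFA) :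
    ∀ w : List (VSym I C R), WellMatched w →
    ∀ q : Q, ∃ q', A.Run (q, ([] : List Q)) w (q', []) := by
  intro w hw
  induction hw with
  | internal u =>
    intro q
    induction u generalizing q with
    | nil => exact ⟨q, .nil _⟩
    | cons a u ihu =>
      obtain ⟨p, hp⟩ := (hdfa.2.1 q a).exists
      obtain ⟨q', hq'⟩ := ihu p
      exact ⟨q', .cons (.int hp) hq'⟩
  | @bracket w c r hw ih =>
    intro q
    have hwm : w ∈ ⋃ J ∈ {J : P | A.link J = (c, r)}, A.RecLang (some J) := by
      rw [hcomp.2.2 c r]; exact hw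
    rw [Set.mem_iUnion₂] at hwm
    obtain ⟨J, hJ, hwJ⟩ := hwm
    obtain ⟨qi, qf, hc1, hi, hc2, hf, hrun⟩ := hwJ
    obtain ⟨p, hp⟩ := (hdfa.2.2 q J).exists
    refine ⟨p, ?_⟩
    have step1 : A.Step (q, ([] : List Q)) (VSym.call c) (qi, [p]) :=
      .call hp (by rw [hJ]) hc1 hi
    have run2 : A.Run (qi, [p]) w (qf, [p]) := by simpa using Run.lift' [p] hrun
    have step3 : A.Step (qf, [p]) (VSym.ret r) (p, []) := .ret hc2 hf (by rw [hJ])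
    exact .cons step1 (Run.append' run2 (.cons step3 (.nil _)))
  | concat h1 h2 ih1 ih2 =>
    intro q
    obtain ⟨qm, r1⟩ := ih1 q
    obtain ⟨q', r2⟩ := ih2 qm
    exact ⟨q', Run.append' r1 r2⟩

lemma uniq {A : VRA I C R P Q} (hcodet : A.Codeterministic) (hdfa : A.AllCompleteDFA) :
    ∀ (n : ℕ) (w : List (VSym I C R)), w.length ≤ n →
    ∀ q q₁ q₂ : Q, A.Run (q, ([] : List Q)) w (q₁, []) →
      A.Run (q, ([] : List Q)) w (q₂, []) → q₁ = q₂ := by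
  intro n
  induction n with
  | zero =>
    intro w hw q q₁ q₂ h₁ h₂
    rw [Nat.le_zero, List.length_eq_zero_iff] at hw
    subst hw
    cases h₁; cases h₂; rfl
  | succ n ih =>
    intro w hw q q₁ q₂ h₁ h₂
    cases h₁ with
    | nil => cases h₂; rfl
    | @cons _ cfg₂ _ a w' s₁ rest₁ =>
      cases h₂ with
      | @cons _ cfg₂' _ _ _ s₂ rest₂ =>
        cases s₁ with
        | @int _ qa _ a ht₁ =>
          cases s₂ with
          | int ht₂ =>
            have : qa = _ := (hdfa.2.1 q a).unique ht₁ ht₂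
            subst this
            exact ih w' (by simp at hw; omega) qa q₁ q₂ rest₁ rest₂
        | @call _ qi₁ p₁ _ J c hpr₁ hc₁ hcm₁ hin₁ =>
          cases s₂ with
          | @call _ qi₂ p₂ _ J' _ hpr₂ hc₂ hcm₂ hin₂ =>
            obtain ⟨u₁, r, u₂, m₁, J₁, he₁, hru₁, hm11, hm12, hm13, hrest₁⟩ := pop' rest₁
            obtain ⟨v₁, r', v₂, m₂, J₂, he₂, hrv₁, hm21, hm22, hm23, hrest₂⟩ := pop' rest₂
            -- identify the component of the inner runs
            have hcmu : A.comp m₁ = some J := by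
              rw [comp_pres u₁.length u₁ le_rfl qi₁ m₁ hru₁, hcm₁]
            have hcmv : A.comp m₂ = some J' := by
              rw [comp_pres v₁.length v₁ le_rfl qi₂ m₂ hrv₁, hcm₂]
            have hJ₁ : J₁ = J := by rw [hcmu] at hm11; exact (Option.some.inj hm11).symm
            have hJ₂ : J₂ = J' := by rw [hcmv] at hm21; exact (Option.some.inj hm21).symm
            rw [hJ₁] at hm13
            rw [hJ₂] at hm23
            -- balance argument: u₁ = v₁
            have hbal₁ : u₁.countP VSym.isRet = u₁.countP VSym.isCall := by
              have := stack_len hru₁; simpa using this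
            have hbal₂ : v₁.countP VSym.isRet = v₁.countP VSym.isCall := by
              have := stack_len hrv₁; simpa using this
            have hww : u₁ ++ VSym.ret r :: u₂ = v₁ ++ VSym.ret r' :: v₂ :=
              he₁.symm.trans he₂
            have hlen : u₁.length = v₁.length := by
              rcases lt_trichotomy u₁.length v₁.length with hlt | heq | hgt
              · exfalso
                have hp1 : (u₁ ++ [VSym.ret r]) <+: (v₁ ++ VSym.ret r' :: v₂) := by
                  rw [← hww]
                  exact ⟨u₂, by simp⟩
                have hp2 : (u₁ ++ [VSym.ret r]) <+: v₁ :=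
                  List.prefix_of_prefix_length_le hp1 ⟨VSym.ret r' :: v₂, rfl⟩
                    (by simp; omega)
                have := prefix_bal hrv₁ _ hp2
                simp [List.countP_append, VSym.isRet, VSym.isCall] at this
                omega
              · exact heq
              · exfalso
                have hp1 : (v₁ ++ [VSym.ret r']) <+: (u₁ ++ VSym.ret r :: u₂) := by
                  rw [hww]
                  exact ⟨v₂, by simp⟩
                have hp2 : (v₁ ++ [VSym.ret r']) <+: u₁ :=
                  List.prefix_of_prefix_length_le hp1 ⟨VSym.ret r :: u₂, rfl⟩
                    (by simp; omega)
                have := prefix_bal hru₁ _ hp2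
                simp [List.countP_append, VSym.isRet, VSym.isCall] at this
                omega
            obtain ⟨huv, htail⟩ := List.append_inj hww hlen
            have hr' : r = r' := by
              have := (List.cons.injEq _ _ _ _).mp htail
              exact VSym.ret.inj this.1
            have hu₂ : u₂ = v₂ := ((List.cons.injEq _ _ _ _).mp htail).2
            -- codeterminism: J = J'
            have hJJ : J = J' := by
              by_contra hne
              have hlk : A.link J = A.link J' := by
                have h2 : (A.link J).2 = (A.link J').2 := by
                  rw [hm13, hm23, hr']
                have h1 : (A.link J).1 = (A.link J').1 := by rw [hc₁, hc₂]
                exact Prod.ext h1 h2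
              have hmem : u₁ ∈ A.RecLang (some J) ∩ A.RecLang (some J') := by
                constructor
                · exact ⟨qi₁, m₁, hcm₁, hin₁, hcmu, hm12, hru₁⟩
                · rw [huv]
                  exact ⟨qi₂, m₂, hcm₂, hin₂, hcmv, hm22, hrv₁⟩
              rw [hcodet J J' hne hlk] at hmem
              exact hmem
            subst hJJ
            have hp : p₁ = p₂ := (hdfa.2.2 q J).unique hpr₁ hpr₂
            subst hp
            subst hu₂
            have hlen₂ : u₂.length ≤ n := by
              have h1 : w'.length ≤ n := by simp at hw; omega
              rw [he₁] at h1
              simp at h1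
              omega
            exact ih u₂ hlen₂ p₁ q₁ q₂ hrest₁ hrest₂

lemma step_iff {A B : VRA I C R P Q}
    (hlink : B.link = A.link) (hcompB : B.comp = A.comp) (hinit : B.init = A.init)
    (hint : B.intTrans = A.intTrans) (hproc : B.procTrans = A.procTrans)
    (hfinC : ∀ q : Q, A.comp q ≠ none → (B.final q ↔ A.final q)) :
    ∀ (cfg : Q × List Q) (a : VSym I C R) (cfg' : Q × List Q),
      B.Step cfg a cfg' ↔ A.Step cfg a cfg' := by
  intro cfg a cfg'
  constructor
  · intro h
    cases h with
    | int h => exact .int (hint ▸ h)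
    | call h h1 h2 h3 =>
      exact .call (hproc ▸ h) (hlink ▸ h1) (hcompB ▸ h2) (hinit ▸ h3)
    | @ret q _ _ J _ h1 h2 h3 =>
      have hc : A.comp q = some J := hcompB ▸ h1
      exact .ret hc ((hfinC q (by rw [hc]; simp)).mp h2) (hlink ▸ h3)
  · intro h
    cases h with
    | int h => exact .int (hint ▸ h)
    | call h h1 h2 h3 =>
      exact .call (hproc ▸ h) (hlink ▸ h1) (hcompB ▸ h2) (hinit ▸ h3)
    | @ret q _ _ J _ h1 h2 h3 =>
      exact .ret (hcompB ▸ h1) ((hfinC q (by rw [h1]; simp)).mpr h2) (hlink ▸ h3)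

lemma run_iff {A B : VRA I C R P Q}
    (hlink : B.link = A.link) (hcompB : B.comp = A.comp) (hinit : B.init = A.init)
    (hint : B.intTrans = A.intTrans) (hproc : B.procTrans = A.procTrans)
    (hfinC : ∀ q : Q, A.comp q ≠ none → (B.final q ↔ A.final q)) :
    ∀ (cfg : Q × List Q) (w : List (VSym I C R)) (cfg' : Q × List Q),
      B.Run cfg w cfg' ↔ A.Run cfg w cfg' := by
  intro cfg w cfg'
  constructor
  · intro h
    induction h with
    | nil => exact .nil _
    | cons s _ ih =>
      exact .cons ((step_iff hlink hcompB hinit hint hproc hfinC _ _ _).mp s) ih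
  · intro h
    induction h with
    | nil => exact .nil _
    | cons s _ ih =>
      exact .cons ((step_iff hlink hcompB hinit hint hproc hfinC _ _ _).mpr s) ih

end VRA

/-- if `A` is a codeterministic and complete VRA all of whose
component automata are complete DFAs, and `B` is obtained from `A` by swapping
the final and non-final states of the starting automaton (keeping everything else
unchanged), then `L(B) = WM(Σ̂) ∖ L(A)`. -/
theorem VRA.complementation {I C R P Q : Type} (A B : VRA I C R P Q)
    (hcodet : A.Codeterministic) (hcomp : A.Complete) (hdfa : A.AllCompleteDFA)
    (hlink : B.link = A.link) (hcompB : B.comp = A.comp) (hinit : B.init = A.init)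
    (hint : B.intTrans = A.intTrans) (hproc : B.procTrans = A.procTrans)
    (hfinS : ∀ q : Q, A.comp q = none → (B.final q ↔ ¬ A.final q))
    (hfinC : ∀ q : Q, A.comp q ≠ none → (B.final q ↔ A.final q)) :
    B.Lang = {w | WellMatched w} \ A.Lang := by
  have hriff := VRA.run_iff hlink hcompB hinit hint hproc hfinC
  ext w
  simp only [VRA.Lang, VRA.RecLang, Set.mem_setOf_eq, Set.mem_diff]
  constructor
  · rintro ⟨qi, qf, hc1, hi1, hc2, hf, hrun⟩
    rw [hcompB] at hc1 hc2
    rw [hinit] at hi1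
    have hrunA : A.Run (qi, []) w (qf, []) := (hriff _ _ _).mp hrun
    refine ⟨VRA.run_wm w.length w le_rfl qi qf hrunA, ?_⟩
    rintro ⟨qi', qf', hc1', hi1', hc2', hf', hrun'⟩
    obtain ⟨q0, hq0, hq0u⟩ := hdfa.1 none
    have e1 : qi = q0 := hq0u qi ⟨hc1, hi1⟩
    have e2 : qi' = q0 := hq0u qi' ⟨hc1', hi1'⟩
    rw [e2.trans e1.symm] at hrun'
    have : qf = qf' := VRA.uniq hcodet hdfa w.length w le_rfl qi qf qf' hrunA hrun'
    subst this
    exact (hfinS qf hc2).mp hf hf'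
  · rintro ⟨hwm, hnot⟩
    obtain ⟨qi, ⟨hcqi, hiqi⟩, _⟩ := hdfa.1 none
    obtain ⟨q', hrun⟩ := VRA.total hcomp hdfa w hwm qi
    have hcq' : A.comp q' = none := by
      rw [VRA.comp_pres w.length w le_rfl qi q' hrun, hcqi]
    have hnf : ¬ A.final q' := fun hf => hnot ⟨qi, q', hcqi, hiqi, hcq', hf, hrun⟩
    exact ⟨qi, q', by rw [hcompB]; exact hcqi, by rw [hinit]; exact hiqi,
      by rw [hcompB]; exact hcq', (hfinS q' hcq').mpr hnf, (hriff _ _ _).mpr hrun⟩
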